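/- arXiv:2602.01601 — 2 statements merged into one kernel-verified Lean document; each statement's English description precedes it below -/
import Mathlib

section
/- Let n ≥ 2 be an integer. Let (R_1,Z_1),…,(R_n,Z_n) be i.i.d. copies of a pair (R,Z) of square-integrable real random variables satisfying Cov(R_k, Z_j) = 0 for all j,k and Cov(R_k R_{k'}, Z_j Z_{j'}) = 0 for all j,j',k,k'. Write σ_Z² = Var(Z). Define the RLOO estimator G = (1/n) Σ_{j=1}^n (R_j − (1/(n−1)) Σ_{k≠j} R_k) Z_j. Then Var(G) = (σ_Z²/(n−1)) Var(R). -/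
open MeasureTheory ProbabilityTheory Finset

/-- Covariance of two real random variables. -/
noncomputable def covar {Ω : Type*} [MeasurableSpace Ω] (μ : Measure Ω) (X Y : Ω → ℝ) : ℝ :=
  (∫ ω, X ω * Y ω ∂μ) - (∫ ω, X ω ∂μ) * (∫ ω, Y ω ∂μ)

noncomputable def rlooWt (n : ℕ) (j k : Fin n) : ℝ := if k = j then 1 else -(1/((n:ℝ)-1))

lemma rlooWt_self (n : ℕ) (j : Fin n) : rlooWt n j j = 1 := by simp [rlooWt]

lemma rlooWt_ne (n : ℕ) {j k : Fin n} (h : k ≠ j) : rlooWt n j k = -(1/((n:ℝ)-1)) := by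
  simp [rlooWt, h]

lemma cast_facts {n : ℕ} (hn : 2 ≤ n) : (2:ℝ) ≤ (n:ℝ) := by exact_mod_cast hn

lemma rlooWt_sum (n : ℕ) (hn : 2 ≤ n) (j : Fin n) : ∑ k, rlooWt n j k = 0 := by
  have h2 : (2:ℝ) ≤ (n:ℝ) := cast_facts hn
  have hne : (n:ℝ) - 1 ≠ 0 := by linarith
  rw [← Finset.add_sum_erase _ _ (mem_univ j), rlooWt_self]
  rw [Finset.sum_congr rfl (fun k hk => rlooWt_ne n (Finset.mem_erase.1 hk).1)]
  rw [Finset.sum_const, Finset.card_erase_of_mem (mem_univ j), Finset.card_univ,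
    Fintype.card_fin]
  have hcast : ((n - 1 : ℕ) : ℝ) = (n:ℝ) - 1 := by
    have : 1 ≤ n := by omega
    push_cast [Nat.cast_sub this]; ring
  rw [nsmul_eq_mul, hcast]
  field_simp
  ring

lemma rlooWt_dot (n : ℕ) (hn : 2 ≤ n) (j j' : Fin n) :
    ∑ k, rlooWt n j k * rlooWt n j' k
      = if j = j' then (n:ℝ)/((n:ℝ)-1) else -((n:ℝ)/((n:ℝ)-1)^2) := by
  have h2 : (2:ℝ) ≤ (n:ℝ) := cast_facts hn
  have hne : (n:ℝ) - 1 ≠ 0 := by linarith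
  by_cases h : j = j'
  · subst h
    rw [if_pos rfl]
    rw [← Finset.add_sum_erase _ _ (mem_univ j), rlooWt_self]
    rw [Finset.sum_congr rfl (fun k hk => by
      rw [rlooWt_ne n (Finset.mem_erase.1 hk).1])]
    rw [Finset.sum_const, Finset.card_erase_of_mem (mem_univ j), Finset.card_univ,
      Fintype.card_fin]
    have hcast : ((n - 1 : ℕ) : ℝ) = (n:ℝ) - 1 := by
      have : 1 ≤ n := by omega
      push_cast [Nat.cast_sub this]; ring
    rw [nsmul_eq_mul, hcast]
    field_simp
    ring
  · simp only [if_neg h]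
    have hj' : j' ∈ Finset.univ.erase j := Finset.mem_erase.2 ⟨Ne.symm h, mem_univ j'⟩
    rw [← Finset.add_sum_erase _ _ (mem_univ j), ← Finset.add_sum_erase _ _ hj']
    rw [rlooWt_self, rlooWt_ne n (Ne.symm h), rlooWt_self, rlooWt_ne n h]
    rw [Finset.sum_congr rfl (fun k hk => by
      have hk' := Finset.mem_erase.1 hk
      have hk'' := Finset.mem_erase.1 hk'.2
      rw [rlooWt_ne n hk''.1, rlooWt_ne n hk'.1])]
    rw [Finset.sum_const, Finset.card_erase_of_mem hj',
      Finset.card_erase_of_mem (mem_univ j), Finset.card_univ, Fintype.card_fin]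
    have hcast : ((n - 1 - 1 : ℕ) : ℝ) = (n:ℝ) - 2 := by
      have : 2 ≤ n := hn
      push_cast [Nat.cast_sub (by omega : 1 ≤ n - 1), Nat.cast_sub (by omega : 1 ≤ n)]
      ring
    rw [nsmul_eq_mul, hcast]
    field_simp
    ring

lemma rloo_main_sum (n : ℕ) (hn : 2 ≤ n) (a b c d : ℝ) :
    ∑ j : Fin n, ∑ j' : Fin n, ∑ k : Fin n, ∑ k' : Fin n,
      (rlooWt n j k * rlooWt n j' k') * ((if k = k' then b else a^2) * (if j = j' then d else c^2))
      = (n:ℝ)^2 / ((n:ℝ)-1) * ((b - a^2) * (d - c^2)) := by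
  have h2 : (2:ℝ) ≤ (n:ℝ) := cast_facts hn
  have hne : (n:ℝ) - 1 ≠ 0 := by linarith
  have hnne : (n:ℝ) ≠ 0 := by linarith
  have inner1 : ∀ (j' k : Fin n),
      ∑ k', rlooWt n j' k' * (if k = k' then b else a^2) = rlooWt n j' k * (b - a^2) := by
    intro j' k
    have step : ∀ k' : Fin n, rlooWt n j' k' * (if k = k' then b else a^2)
        = rlooWt n j' k' * a^2 + (if k = k' then rlooWt n j' k' * (b - a^2) else 0) := by
      intro k'; by_cases h : k = k' <;> simp [h] <;> ring
    rw [Finset.sum_congr rfl (fun k' _ => step k'), Finset.sum_add_distrib,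
      ← Finset.sum_mul, rlooWt_sum n hn j', Finset.sum_ite_eq]
    simp
  have inner2 : ∀ (j j' : Fin n),
      ∑ k, ∑ k', (rlooWt n j k * rlooWt n j' k') * (if k = k' then b else a^2)
        = (b - a^2) * (if j = j' then (n:ℝ)/((n:ℝ)-1) else -((n:ℝ)/((n:ℝ)-1)^2)) := by
    intro j j'
    have : ∀ k : Fin n, ∑ k', (rlooWt n j k * rlooWt n j' k') * (if k = k' then b else a^2)
        = rlooWt n j k * (rlooWt n j' k * (b - a^2)) := by
      intro k
      rw [← inner1 j' k, Finset.mul_sum]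
      exact Finset.sum_congr rfl fun k' _ => by ring
    rw [Finset.sum_congr rfl (fun k _ => this k), ← rlooWt_dot n hn j j', Finset.mul_sum]
    exact Finset.sum_congr rfl fun k _ => by ring
  have outer : ∀ j j' : Fin n,
      ∑ k, ∑ k', (rlooWt n j k * rlooWt n j' k')
        * ((if k = k' then b else a^2) * (if j = j' then d else c^2))
      = ((b - a^2) * (if j = j' then (n:ℝ)/((n:ℝ)-1) else -((n:ℝ)/((n:ℝ)-1)^2)))
          * (if j = j' then d else c^2) := by
    intro j j'
    rw [← inner2 j j', Finset.sum_mul]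
    refine Finset.sum_congr rfl fun k _ => ?_
    rw [Finset.sum_mul]
    exact Finset.sum_congr rfl fun k' _ => by ring
  rw [Finset.sum_congr rfl (fun j _ => Finset.sum_congr rfl (fun j' _ => outer j j'))]
  have outer2 : ∀ j : Fin n,
      ∑ j' : Fin n, ((b - a^2) * (if j = j' then (n:ℝ)/((n:ℝ)-1) else -((n:ℝ)/((n:ℝ)-1)^2)))
          * (if j = j' then d else c^2)
      = (b - a^2) * ((n:ℝ) * (d - c^2) / ((n:ℝ)-1)) := by
    intro j
    have step : ∀ j' : Fin n,
        ((b - a^2) * (if j = j' then (n:ℝ)/((n:ℝ)-1) else -((n:ℝ)/((n:ℝ)-1)^2)))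
          * (if j = j' then d else c^2)
        = (b - a^2) * (-((n:ℝ)/((n:ℝ)-1)^2)) * c^2
          + (if j = j' then (b - a^2) * ((n:ℝ)/((n:ℝ)-1)) * d
              - (b - a^2) * (-((n:ℝ)/((n:ℝ)-1)^2)) * c^2 else 0) := by
      intro j'; by_cases h : j = j' <;> simp [h] <;> ring
    rw [Finset.sum_congr rfl (fun j' _ => step j'), Finset.sum_add_distrib,
      Finset.sum_const, Finset.sum_ite_eq, Finset.card_univ, Fintype.card_fin]
    simp only [mem_univ, if_pos, nsmul_eq_mul]
    field_simp
    ring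
  rw [Finset.sum_congr rfl (fun j _ => outer2 j), Finset.sum_const, Finset.card_univ,
    Fintype.card_fin, nsmul_eq_mul]
  field_simp

lemma rloo_main_sum' (n : ℕ) (hn : 2 ≤ n) (a b c d : ℝ) :
    ∑ p : Fin n × Fin n, ∑ p' : Fin n × Fin n,
      (rlooWt n p.1 p.2 * rlooWt n p'.1 p'.2)
        * ((if p.2 = p'.2 then b else a^2) * (if p.1 = p'.1 then d else c^2))
      = (n:ℝ)^2 / ((n:ℝ)-1) * ((b - a^2) * (d - c^2)) := by
  rw [← rloo_main_sum n hn a b c d]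
  rw [← Finset.univ_product_univ, Finset.sum_product]
  refine Finset.sum_congr rfl fun j _ => ?_
  rw [Finset.sum_comm]
  rw [Finset.sum_product]
  refine Finset.sum_congr rfl fun j' _ => ?_
  rw [Finset.sum_comm]

lemma abs_mul_le_half (x y : ℝ) : |x * y| ≤ (x^2 + y^2)/2 := by
  rw [abs_le]
  constructor <;> nlinarith [sq_nonneg (x+y), sq_nonneg (x-y)]

lemma variance_ae_zero {Ω : Type*} [MeasurableSpace Ω] {μ : Measure Ω} {X : Ω → ℝ}
    (hX : X =ᵐ[μ] 0) : ProbabilityTheory.variance X μ = 0 := by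
  have h0 : (∫ ω, X ω ∂μ) = 0 := by rw [integral_congr_ae hX]; simp
  have he : ProbabilityTheory.evariance X μ = 0 := by
    simp only [ProbabilityTheory.evariance]
    have h : (fun ω => ‖X ω - ∫ ω', X ω' ∂μ‖ₑ^2) =ᵐ[μ] fun _ => 0 := by
      filter_upwards [hX] with ω hω
      simp [hω, h0]
    rw [lintegral_congr_ae h, lintegral_zero]
  simp [ProbabilityTheory.variance, he]

/-- **RLOO gradient variance (continuous reward).** -/
theorem rloo_variance_continuous
    {Ω : Type*} [MeasurableSpace Ω] (μ : Measure Ω) [IsProbabilityMeasure μ]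
    (n : ℕ) (hn : 2 ≤ n)
    (R Z : Ω → ℝ) (Rv Zv : Fin n → Ω → ℝ)
    (hR2 : MemLp R 2 μ) (hZ2 : MemLp Z 2 μ)
    (hident : ∀ i, IdentDistrib (fun ω => (Rv i ω, Zv i ω)) (fun ω => (R ω, Z ω)) μ μ)
    (hindep : iIndepFun (fun i ω => (Rv i ω, Zv i ω)) μ)
    (hcov1 : ∀ j k, covar μ (Rv k) (Zv j) = 0)
    (hcov2 : ∀ j j' k k', covar μ (fun ω => Rv k ω * Rv k' ω)
      (fun ω => Zv j ω * Zv j' ω) = 0) :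
    variance (fun ω =>
        (1 / (n : ℝ)) * ∑ j,
          (Rv j ω - (1 / ((n : ℝ) - 1)) * ∑ k ∈ Finset.univ.erase j, Rv k ω) * Zv j ω) μ
      = variance Z μ / ((n : ℝ) - 1) * variance R μ := by
  have h2 : (2:ℝ) ≤ (n:ℝ) := cast_facts hn
  have hne : (n:ℝ) - 1 ≠ 0 := by linarith
  have hnne : (n:ℝ) ≠ 0 := by linarith
  -- identically distributed coordinates
  have hidR : ∀ i, IdentDistrib (Rv i) R μ μ := fun i => (hident i).comp measurable_fst
  have hidZ : ∀ i, IdentDistrib (Zv i) Z μ μ := fun i => (hident i).comp measurable_snd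
  have hmR : ∀ i, MemLp (Rv i) 2 μ := fun i => (hidR i).memLp_iff.2 hR2
  have hmZ : ∀ i, MemLp (Zv i) 2 μ := fun i => (hidZ i).memLp_iff.2 hZ2
  have haR : ∀ i, AEMeasurable (Rv i) μ := fun i => (hidR i).aemeasurable_fst
  have haZ : ∀ i, AEMeasurable (Zv i) μ := fun i => (hidZ i).aemeasurable_fst
  have hERi : ∀ i, ∫ ω, Rv i ω ∂μ = ∫ ω, R ω ∂μ := fun i => (hidR i).integral_eq
  have hEZi : ∀ i, ∫ ω, Zv i ω ∂μ = ∫ ω, Z ω ∂μ := fun i => (hidZ i).integral_eq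
  have hER2i : ∀ i, ∫ ω, (Rv i ω)^2 ∂μ = ∫ ω, (R ω)^2 ∂μ := fun i =>
    ((hidR i).comp (measurable_id.pow_const 2)).integral_eq
  have hEZ2i : ∀ i, ∫ ω, (Zv i ω)^2 ∂μ = ∫ ω, (Z ω)^2 ∂μ := fun i =>
    ((hidZ i).comp (measurable_id.pow_const 2)).integral_eq
  -- cross moments from covariance hypotheses
  have hcov1' : ∀ j k, ∫ ω, Rv k ω * Zv j ω ∂μ = (∫ ω, R ω ∂μ) * (∫ ω, Z ω ∂μ) := by
    intro j k
    have h := hcov1 j k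
    simp only [covar, sub_eq_zero] at h
    rw [h, hERi k, hEZi j]
  have h4 : ∀ j j' k k', ∫ ω, (Rv k ω * Rv k' ω) * (Zv j ω * Zv j' ω) ∂μ
      = (∫ ω, Rv k ω * Rv k' ω ∂μ) * (∫ ω, Zv j ω * Zv j' ω ∂μ) := by
    intro j j' k k'
    have h := hcov2 j j' k k'
    simp only [covar, sub_eq_zero] at h
    exact h
  have hERR : ∀ k k', ∫ ω, Rv k ω * Rv k' ω ∂μ
      = if k = k' then (∫ ω, (R ω)^2 ∂μ) else (∫ ω, R ω ∂μ)^2 := by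
    intro k k'
    by_cases h : k = k'
    · subst h
      rw [if_pos rfl]
      rw [show (∫ ω, Rv k ω * Rv k ω ∂μ) = ∫ ω, (Rv k ω)^2 ∂μ from
        integral_congr_ae (Filter.Eventually.of_forall fun ω => by ring), hER2i k]
    · simp only [if_neg h]
      have hRR : IndepFun (Rv k) (Rv k') μ :=
        (hindep.indepFun h).comp measurable_fst measurable_fst
      rw [show (∫ ω, Rv k ω * Rv k' ω ∂μ) = (∫ ω, Rv k ω ∂μ) * (∫ ω, Rv k' ω ∂μ) from
          hRR.integral_mul_eq_mul_integral (haR k).aestronglyMeasurable (haR k').aestronglyMeasurable,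
        hERi k, hERi k', sq]
  have hEZZ : ∀ j j', ∫ ω, Zv j ω * Zv j' ω ∂μ
      = if j = j' then (∫ ω, (Z ω)^2 ∂μ) else (∫ ω, Z ω ∂μ)^2 := by
    intro j j'
    by_cases h : j = j'
    · subst h
      rw [if_pos rfl]
      rw [show (∫ ω, Zv j ω * Zv j ω ∂μ) = ∫ ω, (Zv j ω)^2 ∂μ from
        integral_congr_ae (Filter.Eventually.of_forall fun ω => by ring), hEZ2i j]
    · simp only [if_neg h]
      have hZZ : IndepFun (Zv j) (Zv j') μ :=
        (hindep.indepFun h).comp measurable_snd measurable_snd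
      rw [show (∫ ω, Zv j ω * Zv j' ω ∂μ) = (∫ ω, Zv j ω ∂μ) * (∫ ω, Zv j' ω ∂μ) from
          hZZ.integral_mul_eq_mul_integral (haZ j).aestronglyMeasurable (haZ j').aestronglyMeasurable,
        hEZi j, hEZi j', sq]
  by_cases hA : ∀ i, Integrable (fun ω => (Rv i ω)^2 * (Zv i ω)^2) μ
  · -- main case
    -- integrability facts
    have hsqRZ : ∀ k j, Integrable (fun ω => (Rv k ω * Zv j ω)^2) μ := by
      intro k j
      by_cases h : k = j
      · subst h
        exact (hA k).congr (Filter.Eventually.of_forall fun ω => by ring)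
      · have hRZ : IndepFun (Rv k) (Zv j) μ :=
          (hindep.indepFun h).comp measurable_fst measurable_snd
        have hRZ2 : IndepFun (fun ω => (Rv k ω)^2) (fun ω => (Zv j ω)^2) μ :=
          hRZ.comp (measurable_id.pow_const 2) (measurable_id.pow_const 2)
        have := hRZ2.integrable_mul (hmR k).integrable_sq (hmZ j).integrable_sq
        exact this.congr (Filter.Eventually.of_forall fun ω => by simp [Pi.mul_apply]; ring)
    have hmRZ : ∀ k j, MemLp (fun ω => Rv k ω * Zv j ω) 2 μ := fun k j =>
      (memLp_two_iff_integrable_sq ((haR k).mul (haZ j)).aestronglyMeasurable).2 (hsqRZ k j)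
    have hint2 : ∀ k j, Integrable (fun ω => Rv k ω * Zv j ω) μ := fun k j =>
      (hmRZ k j).integrable one_le_two
    have hint4 : ∀ j j' k k',
        Integrable (fun ω => (Rv k ω * Zv j ω) * (Rv k' ω * Zv j' ω)) μ := by
      intro j j' k k'
      have hbnd : Integrable (fun ω => ((Rv k ω * Zv j ω)^2 + (Rv k' ω * Zv j' ω)^2)/2) μ :=
        ((hsqRZ k j).add (hsqRZ k' j')).div_const 2
      refine Integrable.mono' hbnd
        (((haR k).mul (haZ j)).mul ((haR k').mul (haZ j'))).aestronglyMeasurable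
        (Filter.Eventually.of_forall fun ω => ?_)
      rw [Real.norm_eq_abs]
      exact abs_mul_le_half _ _
    -- rewrite the estimator as a double sum
    have hGeq : (fun ω =>
        (1 / (n : ℝ)) * ∑ j,
          (Rv j ω - (1 / ((n : ℝ) - 1)) * ∑ k ∈ Finset.univ.erase j, Rv k ω) * Zv j ω)
        = fun ω => ∑ j, ∑ k, ((1/(n:ℝ)) * rlooWt n j k) * (Rv k ω * Zv j ω) := by
      funext ω
      have hj : ∀ j, ∑ k, rlooWt n j k * (Rv k ω * Zv j ω)
          = (Rv j ω - (1/((n:ℝ)-1)) * ∑ k ∈ Finset.univ.erase j, Rv k ω) * Zv j ω := by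
        intro j
        rw [← Finset.add_sum_erase _ _ (mem_univ j), rlooWt_self]
        rw [Finset.sum_congr rfl (fun k hk => by
          rw [rlooWt_ne n (Finset.mem_erase.1 hk).1])]
        rw [show ∑ k ∈ Finset.univ.erase j, -(1/((n:ℝ)-1)) * (Rv k ω * Zv j ω)
            = (-(1/((n:ℝ)-1)) * Zv j ω) * ∑ k ∈ Finset.univ.erase j, Rv k ω from by
          rw [Finset.mul_sum]; exact Finset.sum_congr rfl fun k _ => by ring]
        ring
      rw [Finset.mul_sum]
      refine Finset.sum_congr rfl fun j _ => ?_
      rw [← hj j, Finset.mul_sum]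
      exact Finset.sum_congr rfl fun k _ => by ring
    have hmG : MemLp (fun ω => ∑ j, ∑ k, ((1/(n:ℝ)) * rlooWt n j k) * (Rv k ω * Zv j ω)) 2 μ := by
      refine memLp_finset_sum _ fun j _ => memLp_finset_sum _ fun k _ => ?_
      exact (hmRZ k j).const_mul _
    have hEG : ∫ ω, ∑ j, ∑ k, ((1/(n:ℝ)) * rlooWt n j k) * (Rv k ω * Zv j ω) ∂μ = 0 := by
      rw [integral_finset_sum _ (fun j _ =>
        integrable_finset_sum _ (fun k _ => (hint2 k j).const_mul _))]
      have hjval : ∀ j : Fin n, ∫ ω, ∑ k, ((1/(n:ℝ)) * rlooWt n j k) * (Rv k ω * Zv j ω) ∂μ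
          = 0 := by
        intro j
        rw [integral_finset_sum _ (fun k _ => (hint2 k j).const_mul _)]
        have : ∀ k : Fin n, ∫ ω, ((1/(n:ℝ)) * rlooWt n j k) * (Rv k ω * Zv j ω) ∂μ
            = ((1/(n:ℝ)) * ((∫ ω, R ω ∂μ) * (∫ ω, Z ω ∂μ))) * rlooWt n j k := by
          intro k
          rw [integral_const_mul, hcov1' j k]
          ring
        rw [Finset.sum_congr rfl fun k _ => this k, ← Finset.mul_sum, rlooWt_sum n hn j,
          mul_zero]
      rw [Finset.sum_congr rfl fun j _ => hjval j, Finset.sum_const, smul_zero]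
    have hEG2 : ∫ ω, (∑ j, ∑ k, ((1/(n:ℝ)) * rlooWt n j k) * (Rv k ω * Zv j ω))^2 ∂μ
        = (1/(n:ℝ))^2 * ((n:ℝ)^2/((n:ℝ)-1)
            * (((∫ ω, (R ω)^2 ∂μ) - (∫ ω, R ω ∂μ)^2)
              * ((∫ ω, (Z ω)^2 ∂μ) - (∫ ω, Z ω ∂μ)^2))) := by
      have hfun : (fun ω => (∑ j, ∑ k, ((1/(n:ℝ)) * rlooWt n j k) * (Rv k ω * Zv j ω))^2)
          = fun ω => ∑ p : Fin n × Fin n, ∑ p' : Fin n × Fin n,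
              (((1/(n:ℝ)) * rlooWt n p.1 p.2) * (Rv p.2 ω * Zv p.1 ω))
                * (((1/(n:ℝ)) * rlooWt n p'.1 p'.2) * (Rv p'.2 ω * Zv p'.1 ω)) := by
        funext ω
        rw [show (∑ j, ∑ k, ((1/(n:ℝ)) * rlooWt n j k) * (Rv k ω * Zv j ω))
            = ∑ p : Fin n × Fin n, ((1/(n:ℝ)) * rlooWt n p.1 p.2) * (Rv p.2 ω * Zv p.1 ω) from by
          rw [← Finset.univ_product_univ, Finset.sum_product]]
        rw [sq, Finset.sum_mul_sum]
      rw [hfun]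
      have hintFF : ∀ p p' : Fin n × Fin n, Integrable (fun ω =>
          (((1/(n:ℝ)) * rlooWt n p.1 p.2) * (Rv p.2 ω * Zv p.1 ω))
            * (((1/(n:ℝ)) * rlooWt n p'.1 p'.2) * (Rv p'.2 ω * Zv p'.1 ω))) μ := by
        intro p p'
        have h := (hint4 p.1 p'.1 p.2 p'.2).const_mul
          ((((1/(n:ℝ)) * rlooWt n p.1 p.2)) * (((1/(n:ℝ)) * rlooWt n p'.1 p'.2)))
        exact h.congr (Filter.Eventually.of_forall fun ω => by ring)
      rw [integral_finset_sum _ fun p _ => integrable_finset_sum _ fun p' _ => hintFF p p']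
      rw [Finset.sum_congr rfl fun p _ =>
        integral_finset_sum _ fun p' _ => hintFF p p']
      have hval : ∀ p p' : Fin n × Fin n, ∫ ω,
          (((1/(n:ℝ)) * rlooWt n p.1 p.2) * (Rv p.2 ω * Zv p.1 ω))
            * (((1/(n:ℝ)) * rlooWt n p'.1 p'.2) * (Rv p'.2 ω * Zv p'.1 ω)) ∂μ
          = (1/(n:ℝ))^2 * ((rlooWt n p.1 p.2 * rlooWt n p'.1 p'.2)
              * ((if p.2 = p'.2 then (∫ ω, (R ω)^2 ∂μ) else (∫ ω, R ω ∂μ)^2)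
                * (if p.1 = p'.1 then (∫ ω, (Z ω)^2 ∂μ) else (∫ ω, Z ω ∂μ)^2))) := by
        intro p p'
        rw [show (fun ω =>
            (((1/(n:ℝ)) * rlooWt n p.1 p.2) * (Rv p.2 ω * Zv p.1 ω))
              * (((1/(n:ℝ)) * rlooWt n p'.1 p'.2) * (Rv p'.2 ω * Zv p'.1 ω)))
            = fun ω => (((1/(n:ℝ)) * rlooWt n p.1 p.2) * ((1/(n:ℝ)) * rlooWt n p'.1 p'.2))
                * ((Rv p.2 ω * Rv p'.2 ω) * (Zv p.1 ω * Zv p'.1 ω)) from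
          funext fun ω => by ring]
        rw [integral_const_mul, h4 p.1 p'.1 p.2 p'.2, hERR, hEZZ]
        ring
      rw [Finset.sum_congr rfl fun p _ => Finset.sum_congr rfl fun p' _ => hval p p']
      simp only [← Finset.mul_sum]
      rw [rloo_main_sum' n hn]
    -- put everything together
    rw [hGeq, variance_eq_sub hmG, variance_eq_sub hR2, variance_eq_sub hZ2]
    simp only [Pi.pow_apply]
    rw [hEG2, hEG]
    field_simp
    ring
  · -- degenerate case: the same-index product is not square integrable
    push_neg at hA
    obtain ⟨i, hi⟩ := hA
    have hni : ¬ Integrable (fun ω => (Rv i ω * Rv i ω) * (Zv i ω * Zv i ω)) μ := by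
      intro hcon
      exact hi (hcon.congr (Filter.Eventually.of_forall fun ω => by ring))
    have h0 : (∫ ω, (R ω)^2 ∂μ) * (∫ ω, (Z ω)^2 ∂μ) = 0 := by
      have h4i := h4 i i i i
      rw [integral_undef hni, hERR, hEZZ] at h4i
      simp only [if_pos rfl] at h4i
      exact h4i.symm
    rcases mul_eq_zero.1 h0 with hb | hd
    · -- ∫ R² = 0 : R and all Rv i vanish a.e.
      have hae : ∀ i', Rv i' =ᵐ[μ] 0 := by
        intro i'
        have hz : ∫ ω, (Rv i' ω)^2 ∂μ = 0 := by rw [hER2i i', hb]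
        have := (integral_eq_zero_iff_of_nonneg (fun ω => sq_nonneg (Rv i' ω))
          (hmR i').integrable_sq).1 hz
        filter_upwards [this] with ω hω
        exact pow_eq_zero_iff two_ne_zero |>.1 hω
      have hG0 : (fun ω =>
          (1 / (n : ℝ)) * ∑ j,
            (Rv j ω - (1 / ((n : ℝ) - 1)) * ∑ k ∈ Finset.univ.erase j, Rv k ω) * Zv j ω)
          =ᵐ[μ] 0 := by
        have hall : ∀ᵐ ω ∂μ, ∀ i', Rv i' ω = 0 := ae_all_iff.2 hae
        filter_upwards [hall] with ω hω
        simp [hω]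
      have hR0 : R =ᵐ[μ] 0 := by
        have := (integral_eq_zero_iff_of_nonneg (fun ω => sq_nonneg (R ω))
          hR2.integrable_sq).1 hb
        filter_upwards [this] with ω hω
        exact pow_eq_zero_iff two_ne_zero |>.1 hω
      rw [variance_ae_zero hG0, variance_ae_zero hR0, mul_zero]
    · -- ∫ Z² = 0 : Z and all Zv j vanish a.e.
      have hae : ∀ j, Zv j =ᵐ[μ] 0 := by
        intro j
        have hz : ∫ ω, (Zv j ω)^2 ∂μ = 0 := by rw [hEZ2i j, hd]
        have := (integral_eq_zero_iff_of_nonneg (fun ω => sq_nonneg (Zv j ω))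
          (hmZ j).integrable_sq).1 hz
        filter_upwards [this] with ω hω
        exact pow_eq_zero_iff two_ne_zero |>.1 hω
      have hG0 : (fun ω =>
          (1 / (n : ℝ)) * ∑ j,
            (Rv j ω - (1 / ((n : ℝ) - 1)) * ∑ k ∈ Finset.univ.erase j, Rv k ω) * Zv j ω)
          =ᵐ[μ] 0 := by
        have hall : ∀ᵐ ω ∂μ, ∀ j, Zv j ω = 0 := ae_all_iff.2 hae
        filter_upwards [hall] with ω hω
        simp [hω]
      have hZ0 : Z =ᵐ[μ] 0 := by
        have := (integral_eq_zero_iff_of_nonneg (fun ω => sq_nonneg (Z ω))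
          hZ2.integrable_sq).1 hd
        filter_upwards [this] with ω hω
        exact pow_eq_zero_iff two_ne_zero |>.1 hω
      rw [variance_ae_zero hG0, variance_ae_zero hZ0, zero_div, zero_mul]
end

section
/- Let n ≥ 2 be an integer. Let (R_1,Z_1),…,(R_n,Z_n) be i.i.d. copies of a pair (R,Z) of square-integrable real random variables satisfying Cov(R_k, Z_j) = 0 for all j,k and Cov(R_k R_{k'}, Z_j Z_{j'}) = 0 for all j,j',k,k'. Write μ_Z = E[Z] and σ_Z² = Var(Z). Then E[(1/(n²(n−1)²)) (Σ_{j=1}^n Σ_{k=1,k≠j}^n R_k Z_j)²] = E[R²] ((1/n) μ_Z² + (1/(n(n−1))) σ_Z²) + (E[R])² (((n−1)/n) μ_Z² + ((n−2)/(n(n−1))) σ_Z²). -/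
open MeasureTheory ProbabilityTheory Finset

lemma iIndepFun_ae_eq {ι Ω : Type*} [MeasurableSpace Ω] {μ : Measure Ω} {β : ι → Type*}
    [m : ∀ i, MeasurableSpace (β i)] {f g : ∀ i, Ω → β i}
    (hf : iIndepFun f μ) (h : ∀ i, f i =ᵐ[μ] g i) : iIndepFun g μ := by
  rw [iIndepFun_iff_measure_inter_preimage_eq_mul] at hf ⊢
  intro S sets hsets
  have hae : ∀ i, (g i ⁻¹' sets i : Set Ω) =ᵐ[μ] (f i ⁻¹' sets i : Set Ω) := by
    intro i
    filter_upwards [h i] with x hx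
    show (g i x ∈ sets i) = (f i x ∈ sets i)
    rw [hx]
  have h1 : μ (⋂ i ∈ S, g i ⁻¹' sets i) = μ (⋂ i ∈ S, f i ⁻¹' sets i) := by
    apply measure_congr
    exact EventuallyEq.countable_bInter S.countable_toSet (fun i _ => hae i)
  rw [h1, hf S hsets]
  exact Finset.prod_congr rfl fun i _ => measure_congr (hae i).symm


lemma l2_mul_integrable {Ω : Type*} [MeasurableSpace Ω] {μ : Measure Ω} {f g : Ω → ℝ}
    (hf : MemLp f 2 μ) (hg : MemLp g 2 μ) :
    Integrable (fun ω => f ω * g ω) μ := by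
  rw [← memLp_one_iff_integrable]
  have h := hg.smul hf (p := 2) (q := 2) (r := 1)
  exact h


lemma comb (n : ℕ) (hn : 2 ≤ n) (a b c d : ℝ) :
    (∑ j : Fin n, ∑ k ∈ Finset.univ.erase j, ∑ j' : Fin n, ∑ k' ∈ Finset.univ.erase j',
      (if k = k' then b else a^2) * (if j = j' then d else c^2))
    = ((n:ℝ)*((n:ℝ)-1))^2 * (a^2*c^2)
      + (n:ℝ)*((n:ℝ)-1)^2 * (a^2*(d-c^2) + (b-a^2)*c^2)
      + (n:ℝ)*((n:ℝ)-1) * ((b-a^2)*(d-c^2)) := by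
  have hrw1 : ∀ x y : Fin n, (if x = y then b else a^2) = a^2 + (if x = y then b - a^2 else 0) := by
    intro x y; split <;> ring
  have hrw2 : ∀ x y : Fin n, (if x = y then d else c^2) = c^2 + (if x = y then d - c^2 else 0) := by
    intro x y; split <;> ring
  have hcard : ∀ j : Fin n, (Finset.univ.erase j).card = n - 1 := by
    intro j; rw [Finset.card_erase_of_mem (Finset.mem_univ j), Finset.card_univ, Fintype.card_fin]
  have hc1 : ((n - 1 : ℕ) : ℝ) = (n : ℝ) - 1 := by
    have h1 : 1 ≤ n := by omega
    push_cast [Nat.cast_sub h1]; ring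
  simp only [hrw1, hrw2, add_mul, mul_add, Finset.sum_add_distrib]
  have e1 : (∑ j : Fin n, ∑ k ∈ Finset.univ.erase j, ∑ j' : Fin n, ∑ k' ∈ Finset.univ.erase j',
      a ^ 2 * c ^ 2) = ((n:ℝ)*((n:ℝ)-1))^2 * (a^2*c^2) := by
    simp [Finset.sum_const, hcard, nsmul_eq_mul, hc1]
    ring
  rw [e1]
  have e2 : (∑ j : Fin n, ∑ k ∈ Finset.univ.erase j, ∑ j' : Fin n, ∑ k' ∈ Finset.univ.erase j',
      a ^ 2 * (if j = j' then d - c ^ 2 else 0)) = (n:ℝ)*((n:ℝ)-1)^2 * (a^2*(d-c^2)) := by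
    simp [Finset.sum_const, hcard, nsmul_eq_mul, mul_ite, mul_zero, Finset.sum_ite_eq, hc1]
    ring
  rw [e2]
  have hrwne : ∀ (x y : Fin n) (v : ℝ), (if ¬ x = y then v else 0) = v - (if x = y then v else 0) := by
    intro x y v; by_cases h : x = y <;> simp [h]
  have e3 : (∑ j : Fin n, ∑ k ∈ Finset.univ.erase j, ∑ j' : Fin n, ∑ k' ∈ Finset.univ.erase j',
      (if k = k' then b - a ^ 2 else 0) * c ^ 2) = (n:ℝ)*((n:ℝ)-1)^2 * ((b-a^2)*c^2) := by
    simp only [ite_mul, zero_mul, Finset.sum_ite_eq, Finset.mem_erase, Finset.mem_univ, and_true]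
    simp only [hrwne, Finset.sum_sub_distrib, Finset.sum_const, Finset.sum_ite_eq,
      Finset.mem_univ, if_true, hcard, nsmul_eq_mul, hc1, Finset.card_univ, Fintype.card_fin]
    ring
  rw [e3]
  have e4 : (∑ j : Fin n, ∑ k ∈ Finset.univ.erase j, ∑ j' : Fin n, ∑ k' ∈ Finset.univ.erase j',
      (if k = k' then b - a ^ 2 else 0) * (if j = j' then d - c ^ 2 else 0))
      = (n:ℝ)*((n:ℝ)-1) * ((b-a^2)*(d-c^2)) := by
    have inner : ∀ (j : Fin n) (k : Fin n), k ∈ Finset.univ.erase j →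
        (∑ j' : Fin n, ∑ k' ∈ Finset.univ.erase j',
          (if k = k' then b - a ^ 2 else 0) * (if j = j' then d - c ^ 2 else 0))
        = (b-a^2)*(d-c^2) := by
      intro j k hk
      have hkj : ¬ k = j := (Finset.mem_erase.mp hk).1
      simp only [ite_mul, zero_mul, Finset.sum_ite_eq, Finset.mem_erase, Finset.mem_univ, and_true]
      simp only [Ne, hrwne, Finset.sum_sub_distrib, Finset.sum_ite_eq, Finset.mem_univ, if_true]
      rw [if_neg (fun h => hkj h.symm)]
      simp [mul_ite, mul_zero, Finset.sum_sub_distrib, Finset.sum_ite_eq]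
    rw [Finset.sum_congr rfl (fun j _ => Finset.sum_congr rfl (inner j))]
    simp [Finset.sum_const, hcard, nsmul_eq_mul, hc1]
    ring
  rw [e4]
  ring

lemma aux_main
    {Ω : Type*} [MeasurableSpace Ω] (μ : Measure Ω) [IsProbabilityMeasure μ]
    (n : ℕ) (hn : 2 ≤ n) (a b c d : ℝ)
    (Rv Zv : Fin n → Ω → ℝ)
    (hmeas : ∀ i, Measurable (fun ω => (Rv i ω, Zv i ω)))
    (hR2 : ∀ i, MemLp (Rv i) 2 μ) (hZ2 : ∀ i, MemLp (Zv i) 2 μ)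
    (hindep : iIndepFun (fun i ω => (Rv i ω, Zv i ω)) μ)
    (ha : ∀ i, ∫ ω, Rv i ω ∂μ = a) (hb : ∀ i, ∫ ω, Rv i ω * Rv i ω ∂μ = b)
    (hc : ∀ i, ∫ ω, Zv i ω ∂μ = c) (hd : ∀ i, ∫ ω, Zv i ω * Zv i ω ∂μ = d)
    (hcov2 : ∀ j j' k k', (∫ ω, (Rv k ω * Rv k' ω) * (Zv j ω * Zv j' ω) ∂μ)
        = (∫ ω, Rv k ω * Rv k' ω ∂μ) * (∫ ω, Zv j ω * Zv j' ω ∂μ)) :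
    (∫ ω, (∑ j, ∑ k ∈ Finset.univ.erase j, Rv k ω * Zv j ω) ^ 2 ∂μ)
      = ((n:ℝ)*((n:ℝ)-1))^2 * (a^2*c^2)
        + (n:ℝ)*((n:ℝ)-1)^2 * (a^2*(d-c^2) + (b-a^2)*c^2)
        + (n:ℝ)*((n:ℝ)-1) * ((b-a^2)*(d-c^2)) := by
  -- step 1: moment computations
  have intR : ∀ i, Integrable (Rv i) μ := fun i => (hR2 i).integrable one_le_two
  have intZ : ∀ i, Integrable (Zv i) μ := fun i => (hZ2 i).integrable one_le_two
  have eR : ∀ k k' : Fin n, ∫ ω, Rv k ω * Rv k' ω ∂μ = if k = k' then b else a^2 := by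
    intro k k'
    by_cases h : k = k'
    · simp [h, hb k']
    · have hind : IndepFun (Rv k) (Rv k') μ :=
        ((hindep.indepFun h).comp (measurable_fst) (measurable_fst))
      have h2 : (∫ ω, Rv k ω * Rv k' ω ∂μ) = (∫ ω, Rv k ω ∂μ) * ∫ ω, Rv k' ω ∂μ :=
        hind.integral_fun_mul_eq_mul_integral (intR k).1 (intR k').1
      rw [if_neg h, h2, ha k, ha k', sq]
  have eZ : ∀ j j' : Fin n, ∫ ω, Zv j ω * Zv j' ω ∂μ = if j = j' then d else c^2 := by
    intro j j'
    by_cases h : j = j'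
    · simp [h, hd j']
    · have hind : IndepFun (Zv j) (Zv j') μ :=
        ((hindep.indepFun h).comp (measurable_snd) (measurable_snd))
      have h2 : (∫ ω, Zv j ω * Zv j' ω ∂μ) = (∫ ω, Zv j ω ∂μ) * ∫ ω, Zv j' ω ∂μ :=
        hind.integral_fun_mul_eq_mul_integral (intZ j).1 (intZ j').1
      rw [if_neg h, h2, hc j, hc j', sq]
  -- independence helpers
  have ind2 : ∀ (i j : Fin n), i ≠ j → ∀ (φ ψ : ℝ × ℝ → ℝ), Measurable φ → Measurable ψ →
      IndepFun (fun ω => φ (Rv i ω, Zv i ω)) (fun ω => ψ (Rv j ω, Zv j ω)) μ := by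
    intro i j hij φ ψ hφ hψ
    exact (hindep.indepFun hij).comp hφ hψ
  have ind3 : ∀ (i j k : Fin n), i ≠ k → j ≠ k →
      ∀ (φ : (ℝ×ℝ)×(ℝ×ℝ) → ℝ) (ψ : ℝ×ℝ → ℝ), Measurable φ → Measurable ψ →
      IndepFun (fun ω => φ ((Rv i ω, Zv i ω), (Rv j ω, Zv j ω)))
        (fun ω => ψ (Rv k ω, Zv k ω)) μ := by
    intro i j k hik hjk φ ψ hφ hψ
    exact (hindep.indepFun_prodMk hmeas i j k hik hjk).comp hφ hψ
  have ind4 : ∀ (i j k l : Fin n), i ≠ k → i ≠ l → j ≠ k → j ≠ l →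
      ∀ (φ ψ : (ℝ×ℝ)×(ℝ×ℝ) → ℝ), Measurable φ → Measurable ψ →
      IndepFun (fun ω => φ ((Rv i ω, Zv i ω), (Rv j ω, Zv j ω)))
        (fun ω => ψ ((Rv k ω, Zv k ω), (Rv l ω, Zv l ω))) μ := by
    intro i j k l hik hil hjk hjl φ ψ hφ hψ
    exact (hindep.indepFun_prodMk_prodMk hmeas i j k l hik hil hjk hjl).comp hφ hψ
  -- integrability of cross terms
  have intTerm : ∀ (j k j' k' : Fin n), k ≠ j → k' ≠ j' →
      Integrable (fun ω => Rv k ω * Zv j ω * (Rv k' ω * Zv j' ω)) μ := by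
    intro j k j' k' hkj hkj'
    rcases eq_or_ne k k' with hA | hA
    · rcases eq_or_ne j j' with hB | hB
      · subst hA; subst hB
        have h := (ind2 k j hkj (fun p => p.1 * p.1) (fun p => p.2 * p.2)
            (by fun_prop) (by fun_prop)).integrable_mul
            (l2_mul_integrable (hR2 k) (hR2 k)) (l2_mul_integrable (hZ2 j) (hZ2 j))
        exact h.congr (Filter.Eventually.of_forall fun ω => by first | (simp only [Pi.mul_apply]; ring) | simp only [Pi.mul_apply])
      · subst hA
        have h := (ind3 j j' k hkj.symm hkj'.symm (fun p => p.1.2 * p.2.2)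
            (fun p => p.1 * p.1) (by fun_prop) (by fun_prop)).integrable_mul
            (l2_mul_integrable (hZ2 j) (hZ2 j')) (l2_mul_integrable (hR2 k) (hR2 k))
        exact h.congr (Filter.Eventually.of_forall fun ω => by first | (simp only [Pi.mul_apply]; ring) | simp only [Pi.mul_apply])
    · rcases eq_or_ne j j' with hB | hB
      · subst hB
        have h := (ind3 k k' j hkj hkj' (fun p => p.1.1 * p.2.1)
            (fun p => p.2 * p.2) (by fun_prop) (by fun_prop)).integrable_mul
            (l2_mul_integrable (hR2 k) (hR2 k')) (l2_mul_integrable (hZ2 j) (hZ2 j))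
        exact h.congr (Filter.Eventually.of_forall fun ω => by first | (simp only [Pi.mul_apply]; ring) | simp only [Pi.mul_apply])
      · rcases eq_or_ne k j' with hC | hC
        · rcases eq_or_ne j k' with hD | hD
          · subst hC; subst hD
            have h := (ind2 k j hkj (fun p => p.1 * p.2) (fun p => p.1 * p.2)
                (by fun_prop) (by fun_prop)).integrable_mul
                (l2_mul_integrable (hR2 k) (hZ2 k)) (l2_mul_integrable (hR2 j) (hZ2 j))
            exact h.congr (Filter.Eventually.of_forall fun ω => by first | (simp only [Pi.mul_apply]; ring) | simp only [Pi.mul_apply])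
          · subst hC
            have h := (ind3 j k' k hkj.symm hA.symm (fun p => p.1.2 * p.2.1)
                (fun p => p.1 * p.2) (by fun_prop) (by fun_prop)).integrable_mul
                (l2_mul_integrable (hZ2 j) (hR2 k')) (l2_mul_integrable (hR2 k) (hZ2 k))
            exact h.congr (Filter.Eventually.of_forall fun ω => by first | (simp only [Pi.mul_apply]; ring) | simp only [Pi.mul_apply])
        · rcases eq_or_ne j k' with hD | hD
          · subst hD
            have h := (ind3 k j' j hkj hB.symm (fun p => p.1.1 * p.2.2)
                (fun p => p.1 * p.2) (by fun_prop) (by fun_prop)).integrable_mul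
                (l2_mul_integrable (hR2 k) (hZ2 j')) (l2_mul_integrable (hR2 j) (hZ2 j))
            exact h.congr (Filter.Eventually.of_forall fun ω => by first | (simp only [Pi.mul_apply]; ring) | simp only [Pi.mul_apply])
          · have h := (ind4 k j k' j' hA hC hD hB (fun p => p.1.1 * p.2.2)
                (fun p => p.1.1 * p.2.2) (by fun_prop) (by fun_prop)).integrable_mul
                (l2_mul_integrable (hR2 k) (hZ2 j)) (l2_mul_integrable (hR2 k') (hZ2 j'))
            exact h.congr (Filter.Eventually.of_forall fun ω => by first | (simp only [Pi.mul_apply]; ring) | simp only [Pi.mul_apply])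
  have eTerm : ∀ (j k j' k' : Fin n),
      (∫ ω, Rv k ω * Zv j ω * (Rv k' ω * Zv j' ω) ∂μ)
        = (if k = k' then b else a^2) * (if j = j' then d else c^2) := by
    intro j k j' k'
    have h1 : (∫ ω, Rv k ω * Zv j ω * (Rv k' ω * Zv j' ω) ∂μ)
        = ∫ ω, Rv k ω * Rv k' ω * (Zv j ω * Zv j' ω) ∂μ := by
      congr 1; funext ω; ring
    rw [h1, hcov2 j j' k k', eR, eZ]
  classical
  set P : Finset ((_ : Fin n) × Fin n) := Finset.univ.sigma (fun j => Finset.univ.erase j)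
    with hP
  have hmem : ∀ p ∈ P, p.2 ≠ p.1 := by
    intro p hp
    exact (Finset.mem_erase.mp (Finset.mem_sigma.mp hp).2).1
  have hsq : ∀ ω : Ω, (∑ j, ∑ k ∈ Finset.univ.erase j, Rv k ω * Zv j ω) ^ 2
      = ∑ p ∈ P, ∑ q ∈ P, Rv p.2 ω * Zv p.1 ω * (Rv q.2 ω * Zv q.1 ω) := by
    intro ω
    rw [show (∑ j, ∑ k ∈ Finset.univ.erase j, Rv k ω * Zv j ω)
        = ∑ p ∈ P, Rv p.2 ω * Zv p.1 ω from
      (Finset.sum_sigma (Finset.univ) (fun j => Finset.univ.erase j) (fun p : (_ : Fin n) × Fin n => Rv p.2 ω * Zv p.1 ω)).symm, sq, Finset.sum_mul_sum]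
  have hint : (∫ ω, (∑ j, ∑ k ∈ Finset.univ.erase j, Rv k ω * Zv j ω) ^ 2 ∂μ)
      = ∑ p ∈ P, ∑ q ∈ P,
        ((if p.2 = q.2 then b else a^2) * (if p.1 = q.1 then d else c^2)) := by
    rw [integral_congr_ae (Filter.Eventually.of_forall hsq)]
    rw [integral_finset_sum P (fun p hp => integrable_finset_sum P
      (fun q hq => intTerm _ _ _ _ (hmem p hp) (hmem q hq)))]
    refine Finset.sum_congr rfl fun p hp => ?_
    rw [integral_finset_sum P (fun q hq => intTerm _ _ _ _ (hmem p hp) (hmem q hq))]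
    exact Finset.sum_congr rfl fun q hq => eTerm _ _ _ _
  rw [hint, hP]
  simp only [Finset.sum_sigma]
  exact comb n hn a b c d


theorem rloo_moment_C2_identity
    {Ω : Type*} [MeasurableSpace Ω] (μ : Measure Ω) [IsProbabilityMeasure μ]
    (n : ℕ) (hn : 2 ≤ n)
    (R Z : Ω → ℝ) (Rv Zv : Fin n → Ω → ℝ)
    (hR2 : MemLp R 2 μ) (hZ2 : MemLp Z 2 μ)
    (hident : ∀ i, IdentDistrib (fun ω => (Rv i ω, Zv i ω)) (fun ω => (R ω, Z ω)) μ μ)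
    (hindep : iIndepFun (fun i ω => (Rv i ω, Zv i ω)) μ)
    (hcov1 : ∀ j k, covar μ (Rv k) (Zv j) = 0)
    (hcov2 : ∀ j j' k k', covar μ (fun ω => Rv k ω * Rv k' ω)
      (fun ω => Zv j ω * Zv j' ω) = 0)
    :
    (∫ ω, (1 / ((n : ℝ) ^ 2 * ((n : ℝ) - 1) ^ 2))
        * (∑ j, ∑ k ∈ Finset.univ.erase j, Rv k ω * Zv j ω) ^ 2 ∂μ)
      = (∫ ω, R ω ^ 2 ∂μ)
          * ((1 / (n : ℝ)) * (∫ ω, Z ω ∂μ) ^ 2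
            + (1 / ((n : ℝ) * ((n : ℝ) - 1))) * variance Z μ)
        + (∫ ω, R ω ∂μ) ^ 2
          * (((n : ℝ) - 1) / (n : ℝ) * (∫ ω, Z ω ∂μ) ^ 2
            + ((n : ℝ) - 2) / ((n : ℝ) * ((n : ℝ) - 1)) * variance Z μ) := by
  classical
  have hWae : ∀ i, AEMeasurable (fun ω => (Rv i ω, Zv i ω)) μ :=
    fun i => (hident i).aemeasurable_fst
  set W : Fin n → Ω → ℝ × ℝ := fun i => (hWae i).mk _ with hWdef
  have hWmeas : ∀ i, Measurable (W i) := fun i => (hWae i).measurable_mk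
  have hWeq : ∀ i, (fun ω => (Rv i ω, Zv i ω)) =ᵐ[μ] W i := fun i => (hWae i).ae_eq_mk
  set Rv' : Fin n → Ω → ℝ := fun i ω => (W i ω).1 with hR'def
  set Zv' : Fin n → Ω → ℝ := fun i ω => (W i ω).2 with hZ'def
  have hpair : ∀ i, (fun ω => (Rv' i ω, Zv' i ω)) = W i := fun i => rfl
  have hmeas' : ∀ i, Measurable (fun ω => (Rv' i ω, Zv' i ω)) := by
    intro i; rw [hpair i]; exact hWmeas i
  have hReq : ∀ i, Rv i =ᵐ[μ] Rv' i := by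
    intro i
    filter_upwards [hWeq i] with ω h
    exact congrArg Prod.fst h
  have hZeq : ∀ i, Zv i =ᵐ[μ] Zv' i := by
    intro i
    filter_upwards [hWeq i] with ω h
    exact congrArg Prod.snd h
  have hident' : ∀ i, IdentDistrib (fun ω => (Rv' i ω, Zv' i ω)) (fun ω => (R ω, Z ω)) μ μ := by
    intro i
    rw [hpair i]
    exact (IdentDistrib.of_ae_eq (hWae i) (hWeq i)).symm.trans (hident i)
  have hindep' : iIndepFun (fun i ω => (Rv' i ω, Zv' i ω)) μ := by
    have h := iIndepFun_ae_eq hindep hWeq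
    have : (fun i ω => (Rv' i ω, Zv' i ω)) = W := by funext i; exact hpair i
    rw [this]
    exact h
  have hidR : ∀ i, IdentDistrib (Rv' i) R μ μ :=
    fun i => (hident' i).comp measurable_fst
  have hidZ : ∀ i, IdentDistrib (Zv' i) Z μ μ :=
    fun i => (hident' i).comp measurable_snd
  have hR2' : ∀ i, MemLp (Rv' i) 2 μ := fun i => ((hidR i).memLp_iff).mpr hR2
  have hZ2' : ∀ i, MemLp (Zv' i) 2 μ := fun i => ((hidZ i).memLp_iff).mpr hZ2
  set a : ℝ := ∫ ω, R ω ∂μ with hadef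
  set c : ℝ := ∫ ω, Z ω ∂μ with hcdef
  set b : ℝ := ∫ ω, R ω * R ω ∂μ with hbdef
  set d : ℝ := ∫ ω, Z ω * Z ω ∂μ with hddef
  have ha : ∀ i, ∫ ω, Rv' i ω ∂μ = a := fun i => (hidR i).integral_eq
  have hc : ∀ i, ∫ ω, Zv' i ω ∂μ = c := fun i => (hidZ i).integral_eq
  have hb : ∀ i, ∫ ω, Rv' i ω * Rv' i ω ∂μ = b := by
    intro i
    exact ((hident' i).comp (show Measurable fun p : ℝ × ℝ => p.1 * p.1 by fun_prop)).integral_eq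
  have hd : ∀ i, ∫ ω, Zv' i ω * Zv' i ω ∂μ = d := by
    intro i
    exact ((hident' i).comp (show Measurable fun p : ℝ × ℝ => p.2 * p.2 by fun_prop)).integral_eq
  have hcov2' : ∀ j j' k k', (∫ ω, (Rv' k ω * Rv' k' ω) * (Zv' j ω * Zv' j' ω) ∂μ)
      = (∫ ω, Rv' k ω * Rv' k' ω ∂μ) * (∫ ω, Zv' j ω * Zv' j' ω ∂μ) := by
    intro j j' k k'
    have h0 : (∫ ω, (Rv k ω * Rv k' ω) * (Zv j ω * Zv j' ω) ∂μ)
        = (∫ ω, Rv k ω * Rv k' ω ∂μ) * (∫ ω, Zv j ω * Zv j' ω ∂μ) :=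
      sub_eq_zero.mp (hcov2 j j' k k')
    have e1 : (∫ ω, (Rv' k ω * Rv' k' ω) * (Zv' j ω * Zv' j' ω) ∂μ)
        = ∫ ω, (Rv k ω * Rv k' ω) * (Zv j ω * Zv j' ω) ∂μ := by
      apply integral_congr_ae
      filter_upwards [hReq k, hReq k', hZeq j, hZeq j'] with ω h1 h2 h3 h4
      rw [h1, h2, h3, h4]
    have e2 : (∫ ω, Rv' k ω * Rv' k' ω ∂μ) = ∫ ω, Rv k ω * Rv k' ω ∂μ := by
      apply integral_congr_ae
      filter_upwards [hReq k, hReq k'] with ω h1 h2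
      rw [h1, h2]
    have e3 : (∫ ω, Zv' j ω * Zv' j' ω ∂μ) = ∫ ω, Zv j ω * Zv j' ω ∂μ := by
      apply integral_congr_ae
      filter_upwards [hZeq j, hZeq j'] with ω h1 h2
      rw [h1, h2]
    rw [e1, e2, e3, h0]
  have key := aux_main μ n hn a b c d Rv' Zv' hmeas' hR2' hZ2' hindep' ha hb hc hd hcov2'
  have hLHS : (∫ ω, (1 / ((n : ℝ) ^ 2 * ((n : ℝ) - 1) ^ 2))
        * (∑ j, ∑ k ∈ Finset.univ.erase j, Rv k ω * Zv j ω) ^ 2 ∂μ)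
      = (1 / ((n : ℝ) ^ 2 * ((n : ℝ) - 1) ^ 2))
        * ∫ ω, (∑ j, ∑ k ∈ Finset.univ.erase j, Rv' k ω * Zv' j ω) ^ 2 ∂μ := by
    rw [integral_const_mul]
    congr 1
    apply integral_congr_ae
    have hReq' : ∀ᵐ ω ∂μ, ∀ i, Rv i ω = Rv' i ω := ae_all_iff.mpr hReq
    have hZeq' : ∀ᵐ ω ∂μ, ∀ i, Zv i ω = Zv' i ω := ae_all_iff.mpr hZeq
    filter_upwards [hReq', hZeq'] with ω h1 h2
    congr 1
    exact Finset.sum_congr rfl fun j _ => Finset.sum_congr rfl fun k _ => by rw [h1 k, h2 j]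
  have hb2 : (∫ ω, R ω ^ 2 ∂μ) = b := by
    rw [hbdef]; congr 1; funext ω; ring
  have hvar : variance Z μ = d - c ^ 2 := by
    rw [variance_eq_sub hZ2, hddef, hcdef]
    congr 2
    funext ω
    simp [sq]
  rw [hLHS, key, hb2]
  have h2n : (2:ℝ) ≤ (n:ℝ) := by exact_mod_cast hn
  have hn0 : (n : ℝ) ≠ 0 := by linarith
  have hn1 : (n : ℝ) - 1 ≠ 0 := by
    have : (1:ℝ) < (n:ℝ) := by linarith
    exact sub_ne_zero.mpr (ne_of_gt this)
  rw [hvar]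
  field_simp
  ring
end
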